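/- Let (X, F) be a set system with op_s-rank equal to k (for some s ≥ 1, k ≥ 0). Then for every 2^s-ary element tree of height n with labels from X, the number of leaves properly labeled by some member of F is at most ∑_{i=0}^{k} (2^s − 1)^{n−i} · C(n,i); that is, ψ^s_F(n) ≤ ∑_{i=0}^{k} (2^s − 1)^{n−i} C(n,i). -/

import Mathlib

/-- A `2^s`-ary element tree with labels from `X` assigns to each node (a list of binary
`s`-strings, i.e. elements of `Fin s → Bool`) an `s`-tuple of elements of `X`.  A leaf
`ξ ∈ (2^s)^n` is properly labeled by `A ⊆ X` if for all `j < n` and `i < s`, the `i`-th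
coordinate of the label of the initial segment `ξ|_{[j]}` belongs to `A` iff `ξ(j)(i) = 1`. -/
def OpProper {X : Type*} {s : ℕ} (T : List (Fin s → Bool) → (Fin s → X)) {n : ℕ}
    (ξ : Fin n → (Fin s → Bool)) (A : Set X) : Prop :=
  ∀ (j : Fin n) (i : Fin s), (T ((List.ofFn ξ).take j.1) i ∈ A ↔ ξ j i = true)

/-- There is a `2^s`-ary element tree of height `k` with labels from `X` in which every leaf
is properly labeled by some member of `F`. -/
def HasOpTree {X : Type*} (F : Set (Set X)) (s k : ℕ) : Prop :=
  ∃ T : List (Fin s → Bool) → (Fin s → X),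
    ∀ ξ : Fin k → (Fin s → Bool), ∃ A ∈ F, OpProper T ξ A

lemma opProper_succ {X : Type*} {s n : ℕ} (T : List (Fin s → Bool) → (Fin s → X))
    (ξ : Fin (n+1) → (Fin s → Bool)) (A : Set X) :
    OpProper T ξ A ↔ ((∀ i, (T [] i ∈ A ↔ ξ 0 i = true)) ∧
      OpProper (fun l => T (ξ 0 :: l)) (Fin.tail ξ) A) := by
  constructor
  · intro h
    refine ⟨fun i => by simpa using h 0 i, fun j i => ?_⟩
    have := h j.succ i
    simpa [List.ofFn_succ, Fin.tail, Fin.tail_def] using this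
  · rintro ⟨h0, h1⟩ j i
    induction j using Fin.cases with
    | zero => simpa using h0 i
    | succ j =>
      have := h1 j i
      simpa [List.ofFn_succ, Fin.tail, Fin.tail_def] using this

lemma hasOpTree_mono {X : Type*} {s : ℕ} {F G : Set (Set X)} (h : F ⊆ G) {m : ℕ} :
    HasOpTree F s m → HasOpTree G s m := by
  rintro ⟨T, hT⟩
  exact ⟨T, fun ξ => by obtain ⟨A, hA, hp⟩ := hT ξ; exact ⟨A, h hA, hp⟩⟩

lemma hasOpTree_extend {X : Type*} {s : ℕ} (F : Set (Set X))
    (T : List (Fin s → Bool) → (Fin s → X)) (k : ℕ)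
    (h : ∀ σ : Fin s → Bool,
      HasOpTree {A | A ∈ F ∧ ∀ i, (T [] i ∈ A ↔ σ i = true)} s k) :
    HasOpTree F s (k+1) := by
  choose t ht using h
  refine ⟨fun l => match l with | [] => T [] | σ :: l' => t σ l', fun ξ => ?_⟩
  obtain ⟨A, ⟨hAF, hA0⟩, hp⟩ := ht (ξ 0) (Fin.tail ξ)
  refine ⟨A, hAF, ?_⟩
  rw [opProper_succ]
  exact ⟨hA0, hp⟩

lemma ncard_split {X : Type*} {s n : ℕ} (F : Set (Set X))
    (T : List (Fin s → Bool) → (Fin s → X)) :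
    {ξ : Fin (n+1) → (Fin s → Bool) | ∃ A ∈ F, OpProper T ξ A}.ncard =
      ∑ σ : Fin s → Bool,
        {η : Fin n → (Fin s → Bool) |
          ∃ A ∈ {A | A ∈ F ∧ ∀ i, (T [] i ∈ A ↔ σ i = true)},
            OpProper (fun l => T (σ :: l)) η A}.ncard := by
  classical
  set Q : (Fin s → Bool) → (Fin n → (Fin s → Bool)) → Prop := fun σ η =>
    ∃ A ∈ {A | A ∈ F ∧ ∀ i, (T [] i ∈ A ↔ σ i = true)},
      OpProper (fun l => T (σ :: l)) η A with hQ
  have e1 : {p : (Fin s → Bool) × (Fin n → (Fin s → Bool)) // Q p.1 p.2} ≃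
      ↑{ξ : Fin (n+1) → (Fin s → Bool) | ∃ A ∈ F, OpProper T ξ A} := by
    refine Equiv.subtypeEquiv (Fin.consEquiv fun _ => (Fin s → Bool)) fun p => ?_
    have : (Fin.consEquiv fun _ : Fin (n+1) => (Fin s → Bool)) p = Fin.cons p.1 p.2 := rfl
    rw [this]
    constructor
    · rintro ⟨A, ⟨hAF, h0⟩, hp⟩
      refine ⟨A, hAF, ?_⟩
      rw [opProper_succ]
      simpa [Fin.cons_zero, Fin.tail_cons] using And.intro h0 hp
    · rintro ⟨A, hAF, hp⟩
      rw [opProper_succ] at hp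
      simp only [Fin.cons_zero, Fin.tail_cons] at hp
      exact ⟨A, ⟨hAF, hp.1⟩, hp.2⟩
  rw [← Nat.card_coe_set_eq, ← Nat.card_congr e1,
    Nat.card_congr (Equiv.subtypeProdEquivSigmaSubtype Q)]
  letI : ∀ σ, Fintype {η : Fin n → (Fin s → Bool) // Q σ η} := fun σ => Fintype.ofFinite _
  rw [Nat.card_eq_fintype_card, Fintype.card_sigma]
  refine Finset.sum_congr rfl fun σ _ => ?_
  rw [← Nat.card_eq_fintype_card]
  exact Nat.card_coe_set_eq {η : Fin n → (Fin s → Bool) | Q σ η}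

lemma op_arith (a n k : ℕ) :
    (∑ i ∈ Finset.range k, a ^ (n - i) * n.choose i) +
      a * ∑ i ∈ Finset.range (k+1), a ^ (n - i) * n.choose i ≤
    ∑ i ∈ Finset.range (k+1), a ^ (n + 1 - i) * (n+1).choose i := by
  rw [Finset.sum_range_succ' (fun i => a ^ (n + 1 - i) * (n+1).choose i) k,
      Finset.sum_range_succ' (fun i => a ^ (n - i) * n.choose i) k, mul_add,
      Finset.mul_sum]
  simp only [Nat.succ_sub_succ, Nat.choose_succ_succ, Nat.sub_zero, Nat.choose_zero_right,
    mul_one, Nat.mul_add, Finset.sum_add_distrib, Nat.succ_eq_add_one]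
  have h1 : a * a ^ n = a ^ (n + 1) := by rw [pow_succ]; ring
  have h2 : ∑ i ∈ Finset.range k, a * (a ^ (n - (i+1)) * n.choose (i+1)) ≤
      ∑ i ∈ Finset.range k, a ^ (n - i) * n.choose (i+1) := by
    refine Finset.sum_le_sum fun i _ => ?_
    rcases le_or_gt (i+1) n with h | h
    · have : n - i = (n - (i+1)) + 1 := by omega
      rw [this, pow_succ]; ring_nf; exact le_rfl
    · simp [Nat.choose_eq_zero_of_lt h]
  omega

lemma op_empty_case {X : Type*} {s n : ℕ} (F : Set (Set X))
    (T : List (Fin s → Bool) → (Fin s → X)) (h0 : ¬ HasOpTree F s 0) :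
    {ξ : Fin n → (Fin s → Bool) | ∃ A ∈ F, OpProper T ξ A} = ∅ := by
  rw [Set.eq_empty_iff_forall_notMem]
  rintro ξ ⟨A, hA, -⟩
  exact h0 ⟨T, fun ξ' => ⟨A, hA, fun j => j.elim0⟩⟩

lemma op_key_bound {X : Type*} {s : ℕ} :
    ∀ (n : ℕ) (F : Set (Set X)) (k : ℕ) (T : List (Fin s → Bool) → (Fin s → X)),
      ¬ HasOpTree F s k →
      {ξ : Fin n → (Fin s → Bool) | ∃ A ∈ F, OpProper T ξ A}.ncard ≤
        ∑ i ∈ Finset.range k, (2 ^ s - 1) ^ (n - i) * n.choose i := by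
  intro n
  induction n with
  | zero =>
    intro F k T hk
    match k with
    | 0 => rw [op_empty_case F T hk]; simp
    | k+1 =>
      have h1 : {ξ : Fin 0 → (Fin s → Bool) | ∃ A ∈ F, OpProper T ξ A}.ncard ≤ 1 := by
        refine le_trans (Set.ncard_le_ncard (Set.subset_univ _) Set.finite_univ) ?_
        rw [Set.ncard_univ]
        simp
      refine le_trans h1 ?_
      have := Finset.single_le_sum
        (f := fun i => (2 ^ s - 1) ^ (0 - i) * Nat.choose 0 i)
        (fun i _ => Nat.zero_le _) (Finset.mem_range.mpr (Nat.succ_pos k))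
      simpa using this
  | succ n ih =>
    intro F k T hk
    match k with
    | 0 => rw [op_empty_case F T hk]; simp
    | k+1 =>
      classical
      rw [ncard_split F T]
      set Fσ : (Fin s → Bool) → Set (Set X) :=
        fun σ => {A | A ∈ F ∧ ∀ i, (T [] i ∈ A ↔ σ i = true)} with hFσ
      set c : (Fin s → Bool) → ℕ := fun σ =>
        {η : Fin n → (Fin s → Bool) |
          ∃ A ∈ Fσ σ, OpProper (fun l => T (σ :: l)) η A}.ncard with hc
      have hmono : ∀ σ, ¬ HasOpTree (Fσ σ) s (k+1) :=
        fun σ h => hk (hasOpTree_mono (fun A hA => hA.1) h)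
      have hex : ∃ σ₀, ¬ HasOpTree (Fσ σ₀) s k := by
        by_contra h
        push_neg at h
        exact hk (hasOpTree_extend F T k h)
      obtain ⟨σ₀, hσ₀⟩ := hex
      have hsum : ∑ σ : Fin s → Bool, c σ =
          c σ₀ + ∑ σ ∈ Finset.univ.erase σ₀, c σ :=
        (Finset.add_sum_erase _ _ (Finset.mem_univ σ₀)).symm
      have hb0 : c σ₀ ≤ ∑ i ∈ Finset.range k, (2 ^ s - 1) ^ (n - i) * n.choose i :=
        ih (Fσ σ₀) k _ hσ₀
      have hb1 : ∑ σ ∈ Finset.univ.erase σ₀, c σ ≤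
          (2 ^ s - 1) * ∑ i ∈ Finset.range (k+1), (2 ^ s - 1) ^ (n - i) * n.choose i := by
        have := Finset.sum_le_card_nsmul (Finset.univ.erase σ₀) c
          (∑ i ∈ Finset.range (k+1), (2 ^ s - 1) ^ (n - i) * n.choose i)
          (fun σ _ => ih (Fσ σ) (k+1) _ (hmono σ))
        have hcard : (Finset.univ.erase σ₀).card = 2 ^ s - 1 := by
          rw [Finset.card_erase_of_mem (Finset.mem_univ σ₀), Finset.card_univ]
          simp
        rw [hcard, smul_eq_mul] at this
        exact this
      calc ∑ σ : Fin s → Bool, c σ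
          ≤ (∑ i ∈ Finset.range k, (2 ^ s - 1) ^ (n - i) * n.choose i) +
            (2 ^ s - 1) * ∑ i ∈ Finset.range (k+1), (2 ^ s - 1) ^ (n - i) * n.choose i := by
            rw [hsum]; exact Nat.add_le_add hb0 hb1
        _ ≤ ∑ i ∈ Finset.range (k+1), (2 ^ s - 1) ^ (n + 1 - i) * (n+1).choose i :=
            op_arith _ n k

theorem op_rank_shatter_bound {X : Type*} (F : Set (Set X)) (s k : ℕ) (hs : 1 ≤ s)
    (hrank : HasOpTree F s k ∧ ∀ m : ℕ, k < m → ¬ HasOpTree F s m)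
    (n : ℕ) (T : List (Fin s → Bool) → (Fin s → X)) :
    {ξ : Fin n → (Fin s → Bool) | ∃ A ∈ F, OpProper T ξ A}.ncard ≤
      ∑ i ∈ Finset.range (k + 1), (2 ^ s - 1) ^ (n - i) * n.choose i := by
  exact op_key_bound n F (k+1) T (hrank.2 (k+1) (Nat.lt_succ_self k))
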